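/- Every multi-qubit completely symmetric state is separable: if ρ is a CS state on (ℂ²)^{⊗d} (N = 2, any number of parties d), then ρ is fully separable. -/

import Mathlib

set_option maxHeartbeats 1600000

open scoped ComplexOrder

section SOSLemmas
open Polynomial Finset

lemma sos_aux : ∀ (N : ℕ) (P : ℝ[X]), P.natDegree ≤ N → (∀ x : ℝ, 0 ≤ P.eval x) →
    ∃ (m : ℕ) (Q : Fin m → ℝ[X]), (∀ i, 2 * (Q i).natDegree ≤ P.natDegree) ∧
      P = ∑ i, (Q i) ^ 2 := by
  intro N
  induction N with
  | zero =>
    intro P hdeg hP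
    refine ⟨1, fun _ => Polynomial.C (Real.sqrt (P.coeff 0)), ?_, ?_⟩
    · intro i; simp
    · have hc : P = Polynomial.C (P.coeff 0) := P.eq_C_of_natDegree_le_zero hdeg
      have h0 : 0 ≤ P.coeff 0 := by
        have := hP 0
        rwa [hc, eval_C] at this
      rw [Finset.sum_const, Finset.card_univ, Fintype.card_fin, one_smul, ← map_pow,
        Real.sq_sqrt h0]
      exact hc
  | succ N ih =>
    intro P hdeg hP
    rcases le_or_gt P.natDegree N with h | h
    · exact ih P h hP
    have hdegP : P.natDegree = N + 1 := le_antisymm hdeg h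
    have hP0 : P ≠ 0 := fun h0 => by simp [h0] at hdegP
    have hdpos : P.degree ≠ 0 := by
      rw [degree_eq_natDegree hP0, hdegP]; exact_mod_cast (Nat.succ_ne_zero N)
    obtain ⟨z, hz⟩ : ∃ z : ℂ, (Polynomial.aeval z) P = 0 :=
      IsAlgClosed.exists_aeval_eq_zero ℂ P hdpos
    by_cases him : z.im = 0
    · -- real root case
      set r : ℝ := z.re with hr
      have hzr : z = (r : ℂ) := Complex.ext rfl him
      have hroot : P.eval r = 0 := by
        have h2 : (Polynomial.aeval ((algebraMap ℝ ℂ) r)) P = algebraMap ℝ ℂ (P.eval r) :=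
          Polynomial.aeval_algebraMap_apply_eq_algebraMap_eval r P
        rw [Complex.coe_algebraMap] at h2
        have h3 : ((P.eval r : ℝ) : ℂ) = 0 := by rw [← h2, ← hzr]; exact hz
        exact_mod_cast h3
      obtain ⟨Q, hQ⟩ : (X - Polynomial.C r) ∣ P := dvd_iff_isRoot.2 hroot
      have hevalPQ : ∀ x : ℝ, P.eval x = (x - r) * Q.eval x := by
        intro x; rw [hQ]; simp
      have hQr : Q.eval r = 0 := by
        have h1 : 0 ≤ Q.eval r := by
          refine ge_of_tendsto ((Q.continuous).continuousWithinAt :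
            Filter.Tendsto (fun x => Q.eval x) (nhdsWithin r (Set.Ioi r)) (nhds (Q.eval r))) ?_
          filter_upwards [self_mem_nhdsWithin] with x hx
          have hxr : (0:ℝ) < x - r := sub_pos.2 hx
          have := hP x
          rw [hevalPQ x] at this
          exact nonneg_of_mul_nonneg_right this hxr
        have h2 : Q.eval r ≤ 0 := by
          refine le_of_tendsto ((Q.continuous).continuousWithinAt :
            Filter.Tendsto (fun x => Q.eval x) (nhdsWithin r (Set.Iio r)) (nhds (Q.eval r))) ?_
          filter_upwards [self_mem_nhdsWithin] with x hx
          have hxr : x - r < 0 := sub_neg.2 hx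
          have := hP x
          rw [hevalPQ x] at this
          nlinarith [this, hxr]
        linarith
      obtain ⟨R, hR⟩ : (X - Polynomial.C r) ∣ Q := dvd_iff_isRoot.2 hQr
      have hPR : P = (X - Polynomial.C r) ^ 2 * R := by rw [hQ, hR]; ring
      have hevalPR : ∀ x : ℝ, P.eval x = (x - r) ^ 2 * R.eval x := by
        intro x; rw [hPR]; simp
      have hRr : 0 ≤ R.eval r := by
        refine ge_of_tendsto ((R.continuous).continuousWithinAt :
          Filter.Tendsto (fun y => R.eval y) (nhdsWithin r {r}ᶜ) (nhds (R.eval r))) ?_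
        filter_upwards [self_mem_nhdsWithin] with y hy
        have hy' : y ≠ r := hy
        have hyx : (0:ℝ) < (y - r) ^ 2 := by
          have : y - r ≠ 0 := sub_ne_zero.2 hy'
          positivity
        have := hP y
        rw [hevalPR y] at this
        exact nonneg_of_mul_nonneg_right this hyx
      have hRnn : ∀ x : ℝ, 0 ≤ R.eval x := by
        intro x
        rcases eq_or_ne x r with hx | hx
        · rw [hx]; exact hRr
        · have hxr : (0:ℝ) < (x - r) ^ 2 := by
            have : x - r ≠ 0 := sub_ne_zero.2 hx
            positivity
          have := hP x
          rw [hevalPR x] at this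
          exact nonneg_of_mul_nonneg_right this hxr
      have hRne : R ≠ 0 := fun h0 => hP0 (by rw [hPR, h0, mul_zero])
      have hdegPR : P.natDegree = 2 + R.natDegree := by
        rw [hPR, natDegree_mul (pow_ne_zero 2 (X_sub_C_ne_zero r)) hRne, natDegree_pow,
          natDegree_X_sub_C]
      obtain ⟨m, Q', hdQ', hsum⟩ := ih R (by omega) hRnn
      refine ⟨m, fun i => (X - Polynomial.C r) * Q' i, ?_, ?_⟩
      · intro i
        rcases eq_or_ne (Q' i) 0 with h0 | h0
        · simp [h0]
        · rw [natDegree_mul (X_sub_C_ne_zero r) h0, natDegree_X_sub_C]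
          have := hdQ' i
          omega
      · rw [hPR, hsum, Finset.mul_sum]
        congr 1; funext i; ring
    · -- complex root case
      set q : ℝ[X] := X ^ 2 - Polynomial.C (2 * z.re) * X + Polynomial.C (‖z‖ ^ 2) with hq
      obtain ⟨R, hR0⟩ := Polynomial.quadratic_dvd_of_aeval_eq_zero_im_ne_zero P hz him
      have hR : P = q * R := by rw [hq]; exact hR0
      have hnorm : ‖z‖ ^ 2 = z.re ^ 2 + z.im ^ 2 := by
        rw [Complex.sq_norm, Complex.normSq_apply]; ring
      have hqAB : q = (X - Polynomial.C z.re) ^ 2 + (Polynomial.C z.im) ^ 2 := by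
        rw [hq, hnorm]
        push_cast [map_add, map_mul, map_pow, map_ofNat]
        ring
      have hqeval : ∀ x : ℝ, q.eval x = (x - z.re) ^ 2 + z.im ^ 2 := by
        intro x; rw [hqAB]; simp
      have hqpos : ∀ x : ℝ, 0 < q.eval x := by
        intro x; rw [hqeval]; positivity
      have hevalPR : ∀ x : ℝ, P.eval x = q.eval x * R.eval x := by
        intro x; rw [hR, eval_mul]
      have hRnn : ∀ x : ℝ, 0 ≤ R.eval x := by
        intro x
        have := hP x
        rw [hevalPR x] at this
        exact nonneg_of_mul_nonneg_right this (hqpos x)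
      have hRne : R ≠ 0 := fun h0 => hP0 (by rw [hR, h0, mul_zero])
      have hqne : q ≠ 0 := fun h0 => by
        have := hqpos 0
        rw [h0] at this; simp at this
      have hdq : q.natDegree = 2 := by
        have : q = Polynomial.C 1 * X ^ 2 + Polynomial.C (-(2 * z.re)) * X
            + Polynomial.C (‖z‖ ^ 2) := by rw [hq, Polynomial.C_1, map_neg]; ring
        rw [this]
        exact natDegree_quadratic one_ne_zero
      have hdegPR : P.natDegree = 2 + R.natDegree := by
        rw [hR, natDegree_mul hqne hRne, hdq]
      obtain ⟨m, Q', hdQ', hsum⟩ := ih R (by omega) hRnn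
      refine ⟨m + m, Fin.addCases (fun i => (X - Polynomial.C z.re) * Q' i)
        (fun i => Polynomial.C z.im * Q' i), ?_, ?_⟩
      · intro i
        refine Fin.addCases ?_ ?_ i
        · intro j
          simp only [Fin.addCases_left]
          rcases eq_or_ne (Q' j) 0 with h0 | h0
          · simp [h0]
          · rw [natDegree_mul (X_sub_C_ne_zero z.re) h0, natDegree_X_sub_C]
            have := hdQ' j
            omega
        · intro j
          simp only [Fin.addCases_right]
          have h1 : ((Polynomial.C z.im) * Q' j).natDegree ≤ (Q' j).natDegree :=
            natDegree_C_mul_le _ _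
          have := hdQ' j
          omega
      · rw [Fin.sum_univ_add]
        simp only [Fin.addCases_left, Fin.addCases_right]
        rw [hR, hqAB, hsum, add_mul, Finset.mul_sum, Finset.mul_sum]
        congr 1
        · exact Finset.sum_congr rfl fun i _ => by ring
        · exact Finset.sum_congr rfl fun i _ => by ring

lemma hankel_pair (d : ℕ) (f : ℕ → ℝ) (Q : ℝ[X]) (hdeg : Q.natDegree ≤ d) :
    ∑ n ∈ Finset.range (2*d+1), (Q^2).coeff n * f n
      = ∑ i ∈ Finset.range (d+1), ∑ j ∈ Finset.range (d+1),
          Q.coeff i * Q.coeff j * f (i+j) := by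
  set F : ℕ × ℕ → ℝ := fun p => Q.coeff p.1 * Q.coeff p.2 * f (p.1 + p.2) with hF
  set T : Finset (ℕ × ℕ) :=
    (Finset.range (2*d+1) ×ˢ Finset.range (2*d+1)).filter (fun p => p.1 + p.2 ≤ 2*d) with hT
  have lhs1 : ∑ n ∈ Finset.range (2*d+1), (Q^2).coeff n * f n
      = ∑ n ∈ Finset.range (2*d+1), ∑ p ∈ T.filter (fun p => p.1 + p.2 = n), F p := by
    refine Finset.sum_congr rfl fun n hn => ?_
    have hset : Finset.HasAntidiagonal.antidiagonal n = T.filter (fun p => p.1 + p.2 = n) := by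
      ext p
      simp only [Finset.HasAntidiagonal.mem_antidiagonal, hT, Finset.mem_filter, Finset.mem_product,
        Finset.mem_range]
      have hn' : n ≤ 2*d := by simpa using Nat.lt_succ_iff.mp (Finset.mem_range.mp hn)
      constructor
      · intro h; omega
      · intro h; omega
    rw [sq, Polynomial.coeff_mul, Finset.sum_mul, hset]
    refine Finset.sum_congr rfl fun p hp => ?_
    have := (Finset.mem_filter.mp hp).2
    rw [hF]; simp only []; rw [this]
  rw [lhs1]
  rw [Finset.sum_fiberwise_of_maps_to (g := fun p : ℕ × ℕ => p.1 + p.2)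
    (fun p hp => Finset.mem_range.mpr (Nat.lt_succ_of_le (Finset.mem_filter.mp hp).2)) F]
  rw [← Finset.sum_product']
  refine (Finset.sum_subset ?_ ?_).symm
  · intro p hp
    rw [Finset.mem_product] at hp
    have h1 := Finset.mem_range.mp hp.1
    have h2 := Finset.mem_range.mp hp.2
    simp only [Finset.mem_filter, Finset.mem_product, Finset.mem_range]
    omega
  · intro p hpT hpS
    simp only [Finset.mem_filter, Finset.mem_product, Finset.mem_range] at hpT hpS
    have : d + 1 ≤ p.1 ∨ d + 1 ≤ p.2 := by
      by_contra hc
      push_neg at hc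
      exact hpS ⟨by omega, by omega⟩
    rw [hF]
    rcases this with h | h
    · have : Q.coeff p.1 = 0 := Q.coeff_eq_zero_of_natDegree_lt (by omega)
      simp [this]
    · have : Q.coeff p.2 = 0 := Q.coeff_eq_zero_of_natDegree_lt (by omega)
      simp [this]

lemma key_dual (d : ℕ) (f : ℕ → ℝ)
    (hpsd : ∀ u : Fin (d+1) → ℝ, 0 ≤ ∑ i, ∑ j, u i * u j * f ((i:ℕ) + (j:ℕ)))
    (Y : Fin (2*d+1) → ℝ) (hY : ∀ x : ℝ, 0 ≤ ∑ n : Fin (2*d+1), Y n * x ^ (n:ℕ)) :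
    0 ≤ ∑ n : Fin (2*d+1), Y n * f (n:ℕ) := by
  set P : ℝ[X] := ∑ n : Fin (2*d+1), Polynomial.C (Y n) * X ^ (n:ℕ) with hP
  have heval : ∀ x : ℝ, P.eval x = ∑ n : Fin (2*d+1), Y n * x ^ (n:ℕ) := by
    intro x
    rw [hP, Polynomial.eval_finset_sum]
    exact Finset.sum_congr rfl fun n _ => by simp
  have hPnn : ∀ x : ℝ, 0 ≤ P.eval x := fun x => (heval x) ▸ hY x
  have hdeg : P.natDegree ≤ 2*d := by
    refine natDegree_sum_le_of_forall_le _ _ fun i _ => ?_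
    refine le_trans (natDegree_C_mul_le _ _) ?_
    rw [natDegree_X_pow]
    exact Nat.lt_succ_iff.mp i.isLt
  have hcoeff : ∀ n : Fin (2*d+1), P.coeff (n:ℕ) = Y n := by
    intro n
    rw [hP, Polynomial.finset_sum_coeff]
    have : ∀ m : Fin (2*d+1), (Polynomial.C (Y m) * X ^ (m:ℕ)).coeff (n:ℕ)
        = if m = n then Y m else 0 := by
      intro m
      rw [Polynomial.coeff_C_mul, Polynomial.coeff_X_pow]
      by_cases h : m = n
      · simp [h]
      · have : ¬((n:ℕ) = (m:ℕ)) := fun hc => h (Fin.ext hc.symm)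
        simp [this, h]
    rw [Finset.sum_congr rfl fun m _ => this m, Finset.sum_ite_eq' Finset.univ n Y]
    simp
  obtain ⟨m, Q, hdQ, hPsum⟩ := sos_aux (2*d) P hdeg hPnn
  have hstep : ∑ n : Fin (2*d+1), Y n * f (n:ℕ)
      = ∑ s : Fin m, ∑ k ∈ Finset.range (2*d+1), ((Q s)^2).coeff k * f k := by
    rw [Finset.sum_comm]
    rw [← Fin.sum_univ_eq_sum_range (fun k => ∑ s : Fin m, ((Q s)^2).coeff k * f k) (2*d+1)]
    refine Finset.sum_congr rfl fun n _ => ?_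
    rw [← hcoeff n, hPsum, Polynomial.finset_sum_coeff, Finset.sum_mul]
  rw [hstep]
  refine Finset.sum_nonneg fun s _ => ?_
  have hdQs : (Q s).natDegree ≤ d := by
    have h1 := hdQ s
    omega
  rw [hankel_pair d f (Q s) hdQs]
  have := hpsd (fun i : Fin (d+1) => (Q s).coeff (i:ℕ))
  rw [← Fin.sum_univ_eq_sum_range (fun i => ∑ j ∈ Finset.range (d+1),
    (Q s).coeff i * (Q s).coeff j * f (i+j)) (d+1)]
  refine le_trans this (le_of_eq ?_)
  refine Finset.sum_congr rfl fun i _ => ?_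
  rw [← Fin.sum_univ_eq_sum_range (fun j => (Q s).coeff (i:ℕ) * (Q s).coeff j * f ((i:ℕ)+j)) (d+1)]

end SOSLemmas

section ConeLemmas
open Set Filter Topology

lemma isCompact_convexHull' {V : Type*} [NormedAddCommGroup V] [NormedSpace ℝ V]
    [FiniteDimensional ℝ V] {K : Set V} (hK : IsCompact K) :
    IsCompact (convexHull ℝ K) := by
  rcases K.eq_empty_or_nonempty with h | ⟨k₀, hk₀⟩
  · simp [h]
  set M : ℕ := Module.finrank ℝ V + 1 with hM
  set g : (Fin M → ℝ) × (Fin M → V) → V := fun wy => ∑ i, wy.1 i • wy.2 i with hg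
  have hcont : Continuous g := by
    refine continuous_finset_sum _ fun i _ => ?_
    exact ((continuous_apply i).comp continuous_fst).smul
      ((continuous_apply i).comp continuous_snd)
  have hT : IsCompact ((stdSimplex ℝ (Fin M)) ×ˢ (Set.univ.pi fun _ : Fin M => K)) :=
    (isCompact_stdSimplex ℝ (Fin M)).prod (isCompact_univ_pi fun _ => hK)
  have himg : convexHull ℝ K = g '' ((stdSimplex ℝ (Fin M)) ×ˢ (Set.univ.pi fun _ => K)) := by
    apply Set.Subset.antisymm
    · intro x hx
      obtain ⟨ι, hι, z, w, hzK, hai, hwpos, hw1, hsum⟩ :=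
        eq_pos_convex_span_of_mem_convexHull hx
      have hcard : Fintype.card ι ≤ M :=
        hai.card_le_finrank_succ.trans (Nat.add_le_add_right (Submodule.finrank_le _) 1)
      obtain ⟨e⟩ : Nonempty (ι ↪ Fin M) := by
        rw [← Fintype.card_fin M] at hcard
        exact Function.Embedding.nonempty_of_card_le hcard
      classical
      set w' : Fin M → ℝ := fun j => ∑ i : ι, if e i = j then w i else 0 with hw'
      set y' : Fin M → V := fun j => if h : ∃ i, e i = j then z h.choose else k₀ with hy'
      have hy'K : ∀ j, y' j ∈ K := by
        intro j
        rw [hy']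
        by_cases h : ∃ i, e i = j
        · simp only [h, dif_pos]
          exact hzK (Set.mem_range_self _)
        · simp only [h, dif_neg, not_false_iff]
          exact hk₀
      have hy'e : ∀ i : ι, y' (e i) = z i := by
        intro i
        have h : ∃ i', e i' = e i := ⟨i, rfl⟩
        rw [hy']
        simp only [h, dif_pos]
        congr 1
        exact e.injective h.choose_spec
      have hw'sum : ∀ (F : Fin M → V → V), True := fun _ => trivial
      refine ⟨(w', y'), ⟨?_, fun j _ => hy'K j⟩, ?_⟩
      · constructor
        · intro j
          refine Finset.sum_nonneg fun i _ => ?_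
          by_cases h : e i = j
          · rw [if_pos h]; exact (hwpos i).le
          · rw [if_neg h]
        · rw [Finset.sum_comm]
          rw [← hw1]
          refine Finset.sum_congr rfl fun i _ => ?_
          simp [Finset.sum_ite_eq]
      · rw [hg]
        simp only
        have : ∀ j, w' j • y' j = ∑ i : ι, (if e i = j then w i else 0) • y' j := by
          intro j; rw [hw', Finset.sum_smul]
        rw [Finset.sum_congr rfl fun j _ => this j, Finset.sum_comm]
        rw [← hsum]
        refine Finset.sum_congr rfl fun i _ => ?_
        rw [Finset.sum_eq_single (e i)]
        · rw [if_pos rfl, hy'e]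
        · intro j _ hj
          rw [if_neg (fun hc => hj hc.symm), zero_smul]
        · intro h; exact absurd (Finset.mem_univ _) h
    · rintro x ⟨⟨w, y⟩, ⟨⟨hw0, hw1⟩, hyK⟩, rfl⟩
      refine (convex_convexHull ℝ K).sum_mem (fun i _ => hw0 i) hw1 fun i _ => ?_
      exact subset_convexHull ℝ K (hyK i (Set.mem_univ i))
  rw [himg]
  exact hT.image hcont

section ConeOf

variable {E : Type} [NormedAddCommGroup E] [NormedSpace ℝ E]

/-- The convex cone generated by `convexHull ℝ K`. -/
def coneOf (K : Set E) : ConvexCone ℝ E where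
  carrier := {x | ∃ r : ℝ, 0 ≤ r ∧ ∃ k ∈ convexHull ℝ K, x = r • k}
  smul_mem' := by
    rintro cc hcc x ⟨r, hr, k, hk, rfl⟩
    exact ⟨cc * r, mul_nonneg hcc.le hr, k, hk, by rw [smul_smul]⟩
  add_mem' := by
    rintro x ⟨r, hr, k, hk, rfl⟩ y ⟨r', hr', k', hk', rfl⟩
    rcases eq_or_lt_of_le (add_nonneg hr hr' : (0:ℝ) ≤ r + r') with h0 | hpos
    · have hr0 : r = 0 := by linarith
      have hr'0 : r' = 0 := by linarith
      exact ⟨0, le_refl 0, k, hk, by rw [hr0, hr'0]; simp⟩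
    · refine ⟨r + r', hpos.le, (r/(r+r')) • k + (r'/(r+r')) • k', ?_, ?_⟩
      · refine (convex_convexHull ℝ K) hk hk' (by positivity) (by positivity) ?_
        field_simp
      · rw [smul_add, smul_smul, smul_smul,
          mul_div_cancel₀ _ hpos.ne', mul_div_cancel₀ _ hpos.ne']

lemma mem_coneOf {K : Set E} {x : E} :
    x ∈ coneOf K ↔ ∃ r : ℝ, 0 ≤ r ∧ ∃ k ∈ convexHull ℝ K, x = r • k := Iff.rfl

lemma coneOf_isClosed [FiniteDimensional ℝ E] (K : Set E) (hK : IsCompact K)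
    (φ : E →L[ℝ] ℝ) (c : ℝ) (hc : 0 < c) (hφK : ∀ y ∈ K, c ≤ φ y) :
    IsClosed (coneOf K : Set E) := by
  have hhullcpt : IsCompact (convexHull ℝ K) := isCompact_convexHull' hK
  have hφhull : ∀ y ∈ convexHull ℝ K, c ≤ φ y := by
    intro y hy
    have : convexHull ℝ K ⊆ {y | c ≤ φ y} :=
      convexHull_min hφK (convex_halfSpace_ge ⟨fun a b => map_add φ a b,
        fun a b => map_smul φ a b⟩ c)
    exact this hy
  refine IsSeqClosed.isClosed ?_
  intro u x hu hx
  choose r hr k hk hueq using hu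
  have hφu : Tendsto (fun n => φ (u n)) atTop (𝓝 (φ x)) := (φ.continuous.tendsto x).comp hx
  have hev : ∀ᶠ n in atTop, φ (u n) < φ x + 1 :=
    hφu.eventually_lt_const (lt_add_one (φ x))
  obtain ⟨N, hN⟩ := eventually_atTop.mp hev
  set B : ℝ := max 0 ((φ x + 1) / c) with hB
  have hrB : ∀ n, r (n + N) ∈ Set.Icc (0:ℝ) B := by
    intro n
    refine ⟨hr _, ?_⟩
    have h1 : φ (u (n + N)) = r (n + N) * φ (k (n + N)) := by
      rw [hueq, map_smul, smul_eq_mul]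
    have h2 : c ≤ φ (k (n + N)) := hφhull _ (hk _)
    have h3 : r (n + N) * c ≤ φ (u (n + N)) := by
      rw [h1]
      exact mul_le_mul_of_nonneg_left h2 (hr _)
    have h4 : φ (u (n + N)) < φ x + 1 := hN _ (Nat.le_add_left N n)
    have : r (n + N) ≤ (φ x + 1) / c := by
      rw [le_div_iff₀ hc]
      linarith
    exact this.trans (le_max_right _ _)
  have hcpt : IsCompact ((Set.Icc (0:ℝ) B) ×ˢ convexHull ℝ K) :=
    isCompact_Icc.prod hhullcpt
  obtain ⟨⟨r₀, k₀⟩, hmem, ψ, hψ, hconv⟩ :=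
    hcpt.tendsto_subseq (x := fun n => (r (n + N), k (n + N))) (fun n => ⟨hrB n, hk _⟩)
  have h1 : Tendsto (fun n => r (ψ n + N) • k (ψ n + N)) atTop (𝓝 (r₀ • k₀)) :=
    (continuous_smul.tendsto (r₀, k₀)).comp hconv
  have h2 : Tendsto (fun n => u (ψ n + N)) atTop (𝓝 x) :=
    hx.comp (tendsto_atTop_mono (fun n => Nat.le_add_right (ψ n) N) hψ.tendsto_atTop)
  have h3 : (fun n => u (ψ n + N)) = fun n => r (ψ n + N) • k (ψ n + N) :=
    funext fun n => hueq _
  rw [h3] at h2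
  exact ⟨r₀, hmem.1.1, k₀, hmem.2, tendsto_nhds_unique h2 h1⟩

end ConeOf

lemma pilp_sum_apply {M : ℕ} {α : Type*} (s : Finset α) (v : α → EuclideanSpace ℝ (Fin M))
    (n : Fin M) : (∑ i ∈ s, v i) n = ∑ i ∈ s, v i n := by
  classical
  induction s using Finset.cons_induction with
  | empty => rfl
  | cons a s ha ih => rw [Finset.sum_cons, Finset.sum_cons, PiLp.add_apply, ih]

lemma hankel_moment (d : ℕ) (f : ℕ → ℝ)
    (hpsd : ∀ u : Fin (d+1) → ℝ, 0 ≤ ∑ i, ∑ j, u i * u j * f ((i:ℕ) + (j:ℕ))) :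
    ∃ (m : ℕ) (lam a b : Fin m → ℝ), (∀ t, 0 < lam t) ∧ (∀ t, (a t)^2 + (b t)^2 = 1) ∧
      ∀ n : ℕ, n ≤ 2*d → f n = ∑ t, lam t * ((a t) ^ (2*d - n) * (b t) ^ n) := by
  classical
  set mvec : ℝ × ℝ → EuclideanSpace ℝ (Fin (2*d+1)) := fun p =>
    (WithLp.equiv 2 (Fin (2*d+1) → ℝ)).symm
      (fun n => p.1 ^ (2*d - (n:ℕ)) * p.2 ^ (n:ℕ)) with hmvec
  have hmvec_apply : ∀ p n, mvec p n = p.1 ^ (2*d - (n:ℕ)) * p.2 ^ (n:ℕ) := fun p n => rfl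
  set S : Set (ℝ × ℝ) := {p | p.1^2 + p.2^2 = 1} with hS
  set K : Set (EuclideanSpace ℝ (Fin (2*d+1))) := mvec '' S with hK
  have hScpt : IsCompact S := by
    refine Metric.isCompact_of_isClosed_isBounded ?_ ?_
    · have : S = (fun p : ℝ × ℝ => p.1^2 + p.2^2) ⁻¹' {1} := by ext p; simp [hS]
      rw [this]
      exact isClosed_singleton.preimage ((continuous_fst.pow 2).add (continuous_snd.pow 2))
    · rw [Metric.isBounded_iff_subset_closedBall 0]
      refine ⟨2, fun p hp => ?_⟩
      have hp' : p.1^2 + p.2^2 = 1 := hp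
      rw [Metric.mem_closedBall, dist_zero_right, Prod.norm_def]
      refine max_le ?_ ?_ <;>
      · rw [Real.norm_eq_abs]
        nlinarith [abs_nonneg p.1, abs_nonneg p.2, sq_abs p.1, sq_abs p.2]
  have hmcont : Continuous mvec := by
    refine (PiLp.continuous_toLp 2 (fun _ : Fin (2*d+1) => ℝ)).comp ?_
    exact continuous_pi fun n => (continuous_fst.pow _).mul (continuous_snd.pow _)
  have hKcpt : IsCompact K := hScpt.image hmcont
  set i0 : Fin (2*d+1) := ⟨0, by omega⟩ with hi0
  set i1 : Fin (2*d+1) := ⟨2*d, by omega⟩ with hi1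
  set φ : EuclideanSpace ℝ (Fin (2*d+1)) →L[ℝ] ℝ :=
    EuclideanSpace.proj i0 + EuclideanSpace.proj i1 with hφ
  have hφ_apply : ∀ x : EuclideanSpace ℝ (Fin (2*d+1)), φ x = x i0 + x i1 := fun x => rfl
  set c : ℝ := (2⁻¹ : ℝ)^d with hc
  have hcpos : 0 < c := by positivity
  have hφK : ∀ y ∈ K, c ≤ φ y := by
    rintro y ⟨p, hp, rfl⟩
    have hp' : p.1^2 + p.2^2 = 1 := hp
    have h1 : φ (mvec p) = p.1^(2*d) + p.2^(2*d) := by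
      rw [hφ_apply]
      simp only [hmvec_apply, hi0, hi1]
      norm_num
    rw [h1]
    have e1 : p.1^(2*d) = (p.1^2)^d := by rw [← pow_mul]
    have e2 : p.2^(2*d) = (p.2^2)^d := by rw [← pow_mul]
    rw [e1, e2]
    rcases le_total (2⁻¹ : ℝ) (p.1^2) with h | h
    · have h1 : c ≤ (p.1^2)^d := pow_le_pow_left₀ (by norm_num) h d
      have h2 : 0 ≤ (p.2^2)^d := pow_nonneg (sq_nonneg _) d
      linarith
    · have h2 : (2⁻¹ : ℝ) ≤ p.2^2 := by nlinarith
      have h1 : c ≤ (p.2^2)^d := pow_le_pow_left₀ (by norm_num) h2 d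
      have h3 : 0 ≤ (p.1^2)^d := pow_nonneg (sq_nonneg _) d
      linarith
  have hKne : (convexHull ℝ K).Nonempty := by
    refine ⟨mvec (1, 0), subset_convexHull ℝ K ⟨(1,0), ?_, rfl⟩⟩
    simp [hS]
  obtain ⟨k₁, hk₁⟩ := hKne
  set C : ConvexCone ℝ (EuclideanSpace ℝ (Fin (2*d+1))) := coneOf K with hC
  have hCne : (C : Set (EuclideanSpace ℝ (Fin (2*d+1)))).Nonempty :=
    ⟨0, ⟨0, le_refl 0, k₁, hk₁, (zero_smul ℝ k₁).symm⟩⟩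
  have hCclosed : IsClosed (C : Set (EuclideanSpace ℝ (Fin (2*d+1)))) :=
    coneOf_isClosed K hKcpt φ c hcpos hφK
  set fvec : EuclideanSpace ℝ (Fin (2*d+1)) :=
    (WithLp.equiv 2 (Fin (2*d+1) → ℝ)).symm (fun n => f (n:ℕ)) with hfvec
  have hfvec_apply : ∀ n, fvec n = f (n:ℕ) := fun n => rfl
  have hfC : fvec ∈ C := by
    by_contra hnot
    set PC : ProperCone ℝ (EuclideanSpace ℝ (Fin (2*d+1))) :=
      ⟨C.toPointedCone (ConvexCone.Pointed.of_nonempty_of_isClosed hCne hCclosed), hCclosed⟩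
    obtain ⟨Y, hYd, hneg⟩ := ProperCone.hyperplane_separation' PC (x₀ := fvec) hnot
    have hYx : ∀ x : ℝ, 0 ≤ ∑ n : Fin (2*d+1), Y n * x ^ (n:ℕ) := by
      intro x
      set s : ℝ := Real.sqrt (1 + x^2) with hs
      have hs2 : s^2 = 1 + x^2 := Real.sq_sqrt (by positivity)
      have hspos : 0 < s := Real.sqrt_pos.mpr (by positivity)
      set p : ℝ × ℝ := (s⁻¹, x * s⁻¹) with hp
      have hpS : p ∈ S := by
        simp only [hS, Set.mem_setOf_eq, hp]
        field_simp
        linarith [hs2]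
      have hmvp : mvec p ∈ C := ⟨1, zero_le_one, mvec p,
        subset_convexHull ℝ K ⟨p, hpS, rfl⟩, (one_smul ℝ _).symm⟩
      have hinner : (0:ℝ) ≤ inner ℝ (mvec p) Y := hYd _ hmvp
      rw [PiLp.inner_apply] at hinner
      simp only [RCLike.inner_apply, conj_trivial] at hinner
      have hkey : ∑ n : Fin (2*d+1), Y n * x ^ (n:ℕ)
          = s^(2*d) * ∑ n : Fin (2*d+1), (mvec p n) * Y n := by
        rw [Finset.mul_sum]
        refine Finset.sum_congr rfl fun n _ => ?_
        rw [hmvec_apply]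
        have hn : (n:ℕ) ≤ 2*d := Nat.lt_succ_iff.mp n.isLt
        have hx : s^(2*d) * (p.1 ^ (2*d - (n:ℕ)) * p.2 ^ (n:ℕ)) = x ^ (n:ℕ) := by
          simp only [hp]
          rw [mul_pow, inv_pow, inv_pow, ← mul_assoc]
          rw [show s^(2*d) * (s ^ (2*d - (n:ℕ)))⁻¹ * (x ^ (n:ℕ) * (s ^ (n:ℕ))⁻¹)
              = x ^ (n:ℕ) * (s^(2*d) * ((s ^ (2*d - (n:ℕ)))⁻¹ * (s ^ (n:ℕ))⁻¹)) by ring]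
          rw [← mul_inv, ← pow_add, Nat.sub_add_cancel hn, mul_inv_cancel₀ (by positivity)]
          ring
        rw [← hx]
        ring
      rw [hkey]
      exact mul_nonneg (by positivity) (by simpa only [mul_comm] using hinner)
    have hkd := key_dual d f hpsd (fun n => Y n) hYx
    refine absurd hneg (not_lt.mpr ?_)
    rw [PiLp.inner_apply]
    simp only [RCLike.inner_apply, conj_trivial]
    calc (0:ℝ) ≤ ∑ n : Fin (2*d+1), Y n * f (n:ℕ) := hkd
      _ = ∑ n : Fin (2*d+1), Y n * fvec n := by
          refine Finset.sum_congr rfl fun n _ => ?_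
          rw [hfvec_apply]
  obtain ⟨r, hr, k, hk, hfeq⟩ := hfC
  rcases eq_or_lt_of_le hr with hr0 | hrpos
  · refine ⟨0, Fin.elim0, Fin.elim0, Fin.elim0, fun t => t.elim0, fun t => t.elim0, ?_⟩
    intro n hn
    have hz : fvec = 0 := by rw [hfeq, ← hr0, zero_smul]
    have h2 : f n = fvec ⟨n, by omega⟩ := (hfvec_apply ⟨n, by omega⟩).symm
    rw [h2, hz]
    simp
  · obtain ⟨ι, hι, z, w, hzK, hai, hwpos, hw1, hsum⟩ :=
      eq_pos_convex_span_of_mem_convexHull hk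
    letI := hι
    have hzS : ∀ i : ι, ∃ p ∈ S, mvec p = z i := by
      intro i
      have := hzK (Set.mem_range_self i)
      rwa [hK, Set.mem_image] at this
    choose p hpS hpz using hzS
    set e := Fintype.equivFin ι with he
    refine ⟨Fintype.card ι, fun t => r * w (e.symm t), fun t => (p (e.symm t)).1,
      fun t => (p (e.symm t)).2, fun t => mul_pos hrpos (hwpos _), fun t => hpS _, ?_⟩
    intro n hn
    have hstep : f n = ∑ i : ι, (r * w i) * ((p i).1 ^ (2*d - n) * (p i).2 ^ n) := by
      have h1 : f n = fvec ⟨n, by omega⟩ := (hfvec_apply ⟨n, by omega⟩).symm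
      rw [h1, hfeq, PiLp.smul_apply, ← hsum, pilp_sum_apply, smul_eq_mul, Finset.mul_sum]
      refine Finset.sum_congr rfl fun i _ => ?_
      rw [PiLp.smul_apply, ← hpz, hmvec_apply, smul_eq_mul]
      ring
    rw [hstep]
    exact (Equiv.sum_comp e.symm
      (fun i => (r * w i) * ((p i).1 ^ (2*d - n) * (p i).2 ^ n))).symm

end ConeLemmas

lemma fin2_eq_of_ne_one {a b : Fin 2} (ha : a ≠ 1) (hb : b ≠ 1) : a = b := by
  fin_cases a <;> fin_cases b <;> simp_all

lemma fin2_val_eq_ite (a : Fin 2) : (a : ℕ) = if a = 1 then 1 else 0 := by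
  fin_cases a <;> simp

lemma exists_perm_comp {γ : Type*} [Fintype γ] [DecidableEq γ] (h h' : γ → Fin 2)
    (hcard : (Finset.univ.filter (fun x => h x = 1)).card
      = (Finset.univ.filter (fun x => h' x = 1)).card) :
    ∃ π : Equiv.Perm γ, h ∘ π = h' := by
  have hc1 : Fintype.card {x // h' x = 1} = Fintype.card {x // h x = 1} := by
    rw [Fintype.card_subtype, Fintype.card_subtype]
    exact hcard.symm
  have e1 : {x // h' x = 1} ≃ {x // h x = 1} := Fintype.equivOfCardEq hc1
  have e0 : {x // ¬ h' x = 1} ≃ {x // ¬ h x = 1} := by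
    apply Fintype.equivOfCardEq
    rw [Fintype.card_subtype_compl, Fintype.card_subtype_compl, hc1]
  refine ⟨(Equiv.sumCompl (fun x => h' x = 1)).symm.trans
    ((e1.sumCongr e0).trans (Equiv.sumCompl (fun x => h x = 1))), funext fun x => ?_⟩
  by_cases hx : h' x = 1
  · have h1 : (Equiv.sumCompl (fun x => h' x = 1)).symm x = Sum.inl ⟨x, hx⟩ :=
      Equiv.sumCompl_symm_apply_of_pos (p := fun x => h' x = 1) hx
    simp only [Function.comp_apply, Equiv.trans_apply, h1, Equiv.sumCongr_apply,
      Sum.map_inl, Equiv.sumCompl_apply_inl]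
    rw [hx]
    exact (e1 ⟨x, hx⟩).2
  · have h1 : (Equiv.sumCompl (fun x => h' x = 1)).symm x = Sum.inr ⟨x, hx⟩ :=
      Equiv.sumCompl_symm_apply_of_neg (p := fun x => h' x = 1) hx
    simp only [Function.comp_apply, Equiv.trans_apply, h1, Equiv.sumCongr_apply,
      Sum.map_inr, Equiv.sumCompl_apply_inr]
    exact fin2_eq_of_ne_one (e0 ⟨x, hx⟩).2 hx

/-- weight of a `Fin 2`-valued function -/
def wt {γ : Type*} [Fintype γ] (h : γ → Fin 2) : ℕ := ∑ x, (h x : ℕ)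

lemma wt_eq_card {γ : Type*} [Fintype γ] [DecidableEq γ] (h : γ → Fin 2) :
    wt h = (Finset.univ.filter (fun x => h x = 1)).card := by
  rw [wt, Finset.card_filter]
  exact Finset.sum_congr rfl fun x _ => fin2_val_eq_ite (h x)

lemma exists_perm_of_wt_eq {γ : Type*} [Fintype γ] [DecidableEq γ] (h h' : γ → Fin 2)
    (hw : wt h = wt h') : ∃ π : Equiv.Perm γ, h ∘ π = h' := by
  apply exists_perm_comp
  rw [← wt_eq_card, ← wt_eq_card, hw]

lemma sum_ite_lt (M n : ℕ) (hn : n ≤ M) :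
    ∑ i : Fin M, (if (i : ℕ) < n then (1:ℕ) else 0) = n := by
  rw [Fin.sum_univ_eq_sum_range (fun j => if j < n then (1:ℕ) else 0) M]
  rw [← Finset.sum_filter]
  have : (Finset.range M).filter (fun j => j < n) = Finset.range n := by
    ext j
    simp only [Finset.mem_filter, Finset.mem_range]
    omega
  rw [this]
  simp

lemma wt_indicator {M n : ℕ} (hn : n ≤ M) :
    wt (fun i : Fin M => if (i : ℕ) < n then (1 : Fin 2) else 0) = n := by
  rw [wt]
  have : ∀ i : Fin M, (((if (i:ℕ) < n then (1:Fin 2) else 0) : Fin 2) : ℕ)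
      = if (i:ℕ) < n then (1:ℕ) else 0 := fun i => by split <;> simp
  rw [Finset.sum_congr rfl fun i _ => this i]
  exact sum_ite_lt M n hn

/-- Completely symmetric matrix on `(ℂ^N)^{⊗d}`. -/
def IsCS {N d : ℕ} (ρ : Matrix (Fin d → Fin N) (Fin d → Fin N) ℂ) : Prop :=
  ∀ (π : Equiv.Perm (Fin d ⊕ Fin d)) (I J : Fin d → Fin N),
    ρ (fun k => Sum.elim I J (π (Sum.inl k))) (fun k => Sum.elim I J (π (Sum.inr k))) = ρ I J

/-- Full separability: `ρ` is a sum of projections onto product vectors. -/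
def FullySep {N d : ℕ} (ρ : Matrix (Fin d → Fin N) (Fin d → Fin N) ℂ) : Prop :=
  ∃ (m : ℕ) (x : Fin m → Fin d → Fin N → ℂ),
    (∀ t k, x t k ≠ 0) ∧
    ∀ I J, ρ I J = ∑ t, (∏ k, x t k (I k)) * star (∏ k, x t k (J k))

/-- Every multi-qubit completely symmetric state is fully separable. -/
theorem stmt_2 {d : ℕ} (ρ : Matrix (Fin d → Fin 2) (Fin d → Fin 2) ℂ)
    (hpsd : ρ.PosSemidef) (htr : ρ.trace = 1) (hCS : IsCS ρ) :
    FullySep ρ := by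
  classical
  by_cases hd : d = 0
  · subst hd
    refine ⟨1, fun _ => Fin.elim0, fun t k => k.elim0, ?_⟩
    intro I J
    have hI : I = J := Subsingleton.elim I J
    have h1 : ρ I J = 1 := by
      have h2 : ρ.trace = ρ I J := by
        rw [Matrix.trace]
        rw [show (Finset.univ : Finset (Fin 0 → Fin 2)) = {I} from
          Finset.eq_singleton_iff_unique_mem.mpr
            ⟨Finset.mem_univ _, fun x _ => Subsingleton.elim x I⟩]
        rw [Finset.sum_singleton]
        rw [Matrix.diag]
        rw [← hI]
      rw [← h2, htr]
    rw [h1]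
    simp
  -- d ≥ 1
  · have hdpos : 0 < d := Nat.pos_of_ne_zero hd
    -- weights
    have hw_le : ∀ I : Fin d → Fin 2, wt I ≤ d := by
      intro I
      calc wt I ≤ ∑ _k : Fin d, 1 :=
            Finset.sum_le_sum fun k _ => Nat.lt_succ_iff.mp (I k).isLt
        _ = d := by simp
    -- symmetry facts
    have hswap : ∀ I J, ρ J I = ρ I J := by
      intro I J
      have h := hCS (Equiv.sumComm (Fin d) (Fin d)) I J
      simpa using h
    have hreal : ∀ I J, ρ I J = ((ρ I J).re : ℂ) := by
      intro I J
      have h1 : ρ J I = star (ρ I J) := (hpsd.isHermitian.apply J I).symm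
      have h2 : ρ I J = star (ρ I J) := by rw [← h1, hswap]
      have := Complex.conj_eq_iff_re.mp h2.symm
      exact this.symm
    have hinv : ∀ I J I' J' : Fin d → Fin 2,
        wt (Sum.elim I J) = wt (Sum.elim I' J') → ρ I J = ρ I' J' := by
      intro I J I' J' hw
      obtain ⟨π, hπ⟩ := exists_perm_of_wt_eq (Sum.elim I J) (Sum.elim I' J') hw
      have h := hCS π I J
      have hI : (fun k => Sum.elim I J (π (Sum.inl k))) = I' := by
        funext k
        have := congrFun hπ (Sum.inl k)
        simpa using this
      have hJ : (fun k => Sum.elim I J (π (Sum.inr k))) = J' := by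
        funext k
        have := congrFun hπ (Sum.inr k)
        simpa using this
      rw [hI, hJ] at h
      exact h.symm
    have wt_elim : ∀ I J : Fin d → Fin 2, wt (Sum.elim I J) = wt I + wt J := by
      intro I J
      rw [wt, Fintype.sum_sum_type]
      rfl
    -- canonical pattern and f
    set χ : ℕ → (Fin d ⊕ Fin d) → Fin 2 :=
      fun n s => if ((finSumFinEquiv s : ℕ) < n) then 1 else 0 with hχ
    have hwtχ : ∀ n, n ≤ d + d → wt (χ n) = n := by
      intro n hn
      have h1 : wt (χ n) = wt (fun i : Fin (d + d) => if (i:ℕ) < n then (1:Fin 2) else 0) := by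
        rw [wt, wt, ← Equiv.sum_comp finSumFinEquiv
          (fun i : Fin (d + d) => (((if (i:ℕ) < n then (1:Fin 2) else 0) : Fin 2) : ℕ))]
      rw [h1]
      exact wt_indicator hn
    set f : ℕ → ℝ := fun n => (ρ (fun k => χ n (Sum.inl k)) (fun k => χ n (Sum.inr k))).re
      with hf
    have bridge : ∀ I J, ρ I J = ((f (wt I + wt J) : ℝ) : ℂ) := by
      intro I J
      set n := wt I + wt J with hn
      have hnle : n ≤ d + d := add_le_add (hw_le I) (hw_le J)
      have helim : Sum.elim (fun k => χ n (Sum.inl k)) (fun k => χ n (Sum.inr k)) = χ n := by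
        funext s; cases s <;> rfl
      have h1 : ρ I J = ρ (fun k => χ n (Sum.inl k)) (fun k => χ n (Sum.inr k)) := by
        apply hinv
        rw [wt_elim, helim, hwtχ n hnle]
      rw [h1, hf]
      exact hreal _ _
    -- Hankel positivity
    set N : ℕ → ℕ :=
      fun a => (Finset.univ.filter (fun I : Fin d → Fin 2 => wt I = a)).card with hN
    have hNpos : ∀ a, a ≤ d → 0 < N a := by
      intro a ha
      rw [hN]
      refine Finset.card_pos.mpr ⟨fun k : Fin d => if (k:ℕ) < a then (1:Fin 2) else 0, ?_⟩
      exact Finset.mem_filter.mpr ⟨Finset.mem_univ _, wt_indicator ha⟩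
    have fiber : ∀ (F : ℕ → ℝ), ∑ I : Fin d → Fin 2, F (wt I)
        = ∑ a ∈ Finset.range (d+1), (N a : ℝ) * F a := by
      intro F
      rw [← Finset.sum_fiberwise_of_maps_to (g := fun I : Fin d → Fin 2 => wt I)
        (t := Finset.range (d+1))
        (fun I _ => Finset.mem_range.mpr (Nat.lt_succ_of_le (hw_le I)))
        (fun I => F (wt I))]
      refine Finset.sum_congr rfl fun a _ => ?_
      rw [Finset.sum_congr rfl (fun I hI => by rw [(Finset.mem_filter.mp hI).2]),
        Finset.sum_const, nsmul_eq_mul]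
    have hpsdf : ∀ u : Fin (d+1) → ℝ,
        0 ≤ ∑ i, ∑ j, u i * u j * f ((i:ℕ) + (j:ℕ)) := by
      intro u
      set ur : ℕ → ℝ := fun a => if h : a ≤ d then u ⟨a, by omega⟩ / (N a) else 0 with hur
      set U : (Fin d → Fin 2) → ℂ := fun I => ((ur (wt I) : ℝ) : ℂ) with hU
      have h0 := hpsd.dotProduct_mulVec_nonneg U
      set Sr : ℝ := ∑ I : Fin d → Fin 2, ∑ J : Fin d → Fin 2,
        ur (wt I) * ur (wt J) * f (wt I + wt J) with hSr
      have hcast : dotProduct (star U) (ρ.mulVec U) = ((Sr : ℝ) : ℂ) := by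
        rw [dotProduct, hSr]
        push_cast
        refine Finset.sum_congr rfl fun I _ => ?_
        rw [Matrix.mulVec, dotProduct, Pi.star_apply, Finset.mul_sum]
        refine Finset.sum_congr rfl fun J _ => ?_
        rw [bridge I J, hU]
        simp only [RCLike.star_def, Complex.conj_ofReal]
        push_cast
        ring
      have hSrnn : 0 ≤ Sr := by
        rw [hcast] at h0
        exact_mod_cast h0
      have hstep1 : Sr = ∑ a ∈ Finset.range (d+1), (N a : ℝ) *
          ∑ b ∈ Finset.range (d+1), (N b : ℝ) * (ur a * ur b * f (a + b)) := by
        rw [hSr]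
        rw [fiber (fun a => ∑ J : Fin d → Fin 2, ur a * ur (wt J) * f (a + wt J))]
        refine Finset.sum_congr rfl fun a _ => ?_
        congr 1
        rw [fiber (fun b => ur a * ur b * f (a + b))]
      have hfin : ∑ a ∈ Finset.range (d+1), (N a : ℝ) *
          ∑ b ∈ Finset.range (d+1), (N b : ℝ) * (ur a * ur b * f (a + b))
          = ∑ i : Fin (d+1), ∑ j : Fin (d+1), u i * u j * f ((i:ℕ) + (j:ℕ)) := by
        rw [← Fin.sum_univ_eq_sum_range (fun a => (N a : ℝ) *
          ∑ b ∈ Finset.range (d+1), (N b : ℝ) * (ur a * ur b * f (a + b))) (d+1)]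
        refine Finset.sum_congr rfl fun i _ => ?_
        rw [← Fin.sum_univ_eq_sum_range
          (fun b => (N b : ℝ) * (ur (i:ℕ) * ur b * f ((i:ℕ) + b))) (d+1), Finset.mul_sum]
        refine Finset.sum_congr rfl fun j _ => ?_
        have ha : (i:ℕ) ≤ d := Nat.lt_succ_iff.mp i.isLt
        have hb : (j:ℕ) ≤ d := Nat.lt_succ_iff.mp j.isLt
        have hNa : ((N (i:ℕ) : ℝ)) ≠ 0 := Nat.cast_ne_zero.mpr (hNpos _ ha).ne'
        have hNb : ((N (j:ℕ) : ℝ)) ≠ 0 := Nat.cast_ne_zero.mpr (hNpos _ hb).ne'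
        rw [hur]
        simp only [dif_pos ha, dif_pos hb, Fin.eta]
        field_simp
      rw [← hfin, ← hstep1]
      exact hSrnn
    -- assembly
    obtain ⟨m, lam, av, bv, hlam, hab, hmom⟩ := hankel_moment d f hpsdf
    set cv : Fin m → ℝ := fun t => (lam t) ^ (((2*d : ℕ) : ℝ))⁻¹ with hcv
    have hcpos : ∀ t, 0 < cv t := fun t => Real.rpow_pos_of_pos (hlam t) _
    have hc2d : ∀ t, (cv t)^(2*d) = lam t := by
      intro t
      rw [hcv]
      rw [← Real.rpow_natCast ((lam t) ^ (((2*d : ℕ) : ℝ))⁻¹) (2*d)]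
      rw [← Real.rpow_mul (hlam t).le]
      rw [inv_mul_cancel₀ (Nat.cast_ne_zero.mpr (by omega : (2*d : ℕ) ≠ 0))]
      exact Real.rpow_one _
    set x : Fin m → Fin d → Fin 2 → ℂ :=
      fun t _ j => ((cv t * (if j = 1 then bv t else av t) : ℝ) : ℂ) with hx
    have hprod : ∀ (t : Fin m) (I : Fin d → Fin 2),
        (∏ k, x t k (I k)) = (((cv t)^d * ((av t)^(d - wt I) * (bv t)^(wt I)) : ℝ) : ℂ) := by
      intro t I
      rw [hx]
      simp only []
      rw [← Complex.ofReal_prod]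
      congr 1
      have hterm : ∀ k, cv t * (if I k = 1 then bv t else av t)
          = cv t * ((av t)^(1 - (I k : ℕ)) * (bv t)^((I k : ℕ))) := by
        intro k
        congr 1
        by_cases h : I k = 1
        · rw [if_pos h, h]
          norm_num
        · rw [if_neg h]
          have h0 : I k = 0 := by
            have := (I k).isLt
            omega
          rw [h0]
          norm_num
      rw [Finset.prod_congr rfl fun k _ => hterm k]
      rw [Finset.prod_mul_distrib, Finset.prod_const, Finset.card_univ, Fintype.card_fin]
      congr 1
      rw [Finset.prod_mul_distrib, Finset.prod_pow_eq_pow_sum, Finset.prod_pow_eq_pow_sum]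
      have hsum : (∑ k, (1 - (I k : ℕ))) + (∑ k, (I k : ℕ)) = d := by
        rw [← Finset.sum_add_distrib]
        have hone : ∀ k : Fin d, (1 - (I k : ℕ)) + (I k : ℕ) = 1 := fun k => by
          have := (I k).isLt; omega
        rw [Finset.sum_congr rfl fun k _ => hone k]
        simp
      have hwtI : wt I = ∑ k, (I k : ℕ) := rfl
      have hexp : (∑ k, (1 - (I k : ℕ))) = d - wt I := by omega
      rw [hexp, hwtI]
    refine ⟨m, x, ?_, ?_⟩
    · intro t k hzero
      have h0 := congrFun hzero 0
      have h1 := congrFun hzero 1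
      rw [hx] at h0 h1
      simp only [Pi.zero_apply, Complex.ofReal_eq_zero] at h0 h1
      rw [if_neg (by decide : ¬((0:Fin 2) = 1))] at h0
      rw [if_pos trivial] at h1
      have hav : av t = 0 := by
        rcases mul_eq_zero.mp h0 with h | h
        · exact absurd h (hcpos t).ne'
        · exact h
      have hbv : bv t = 0 := by
        rcases mul_eq_zero.mp h1 with h | h
        · exact absurd h (hcpos t).ne'
        · exact h
      have := hab t
      rw [hav, hbv] at this
      norm_num at this
    · intro I J
      have hnle : wt I + wt J ≤ 2*d := by
        have h1 := hw_le I
        have h2 := hw_le J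
        omega
      rw [bridge I J, hmom _ hnle, Complex.ofReal_sum]
      refine Finset.sum_congr rfl fun t _ => ?_
      rw [hprod t I, hprod t J]
      rw [RCLike.star_def, Complex.conj_ofReal, ← Complex.ofReal_mul]
      congr 1
      rw [← hc2d t]
      have e1 : cv t ^ d * cv t ^ d = cv t ^ (2*d) := by
        rw [← pow_add]
        congr 1
        omega
      have e2 : av t ^ (d - wt I) * av t ^ (d - wt J) = av t ^ (2*d - (wt I + wt J)) := by
        rw [← pow_add]
        congr 1
        have h1 := hw_le I
        have h2 := hw_le J
        omega
      have e3 : bv t ^ (wt I) * bv t ^ (wt J) = bv t ^ (wt I + wt J) := by rw [← pow_add]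
      rw [← e1, ← e2, ← e3]
      ring
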